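/- In the Weyl superalgebra K_{m,n} (generated by the Laurent polynomial superalgebra A_{m,n} and the superderivations d_i = t_i∂/∂t_i, ∂/∂ξ_j), for each λ ∈ ℂ^m, the module A(λ) — which is A_{m,n} as a vector space with d_i acting as d_i + λ_i, ∂/∂ξ_j acting naturally, and A_{m,n} acting by multiplication — is a strictly simple K_{m,n}-module (it has no invariant subspaces, graded or not, other than 0 and itself). -/

import Mathlib

/-! ### A concrete model of `A_{m,n}` and of the Witt superalgebra `W_{m,n}`

`A_{m,n} = ℂ[t₁^{±1},…,t_m^{±1}] ⊗ Λ(ξ₁,…,ξ_n)` has basis the monomials `t^α ξ_I`,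
indexed by `AIdx m n = (Fin m → ℤ) × Finset (Fin n)`.  The Witt superalgebra
`W_{m,n}` of superderivations of `A_{m,n}` has basis `t^α ξ_I d_i` and
`t^α ξ_I ∂/∂ξ_j` (`d_i = t_i ∂/∂t_i`), indexed by
`WIdx m n = (Fin m → ℤ) × Finset (Fin n) × (Fin m ⊕ Fin n)`. -/

/-- Inversion count: number of pairs `(a,b) ∈ I × J` with `a > b`. -/
def tauF {n : ℕ} (I J : Finset (Fin n)) : ℕ :=
  ((I ×ˢ J).filter fun p => p.2 < p.1).card

/-- The sign arising from `ξ_I · ξ_J = ε(I,J) ξ_{I ∪ J}`:  `(-1)^{τ(I,J)}` when `I, J`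
are disjoint and `0` otherwise. -/
noncomputable def epsF {n : ℕ} (I J : Finset (Fin n)) : ℂ :=
  if Disjoint I J then (-1 : ℂ) ^ tauF I J else 0

/-- Index set of the monomial basis `t^α ξ_I` of `A_{m,n}`. -/
abbrev AIdx (m n : ℕ) := (Fin m → ℤ) × Finset (Fin n)

/-- The underlying vector space of `A_{m,n}`. -/
abbrev ASp (m n : ℕ) := AIdx m n →₀ ℂ

/-- Index set of the basis `t^α ξ_I ∂` (`∂ = d_i` or `∂/∂ξ_j`) of `W_{m,n}`. -/
abbrev WIdx (m n : ℕ) := (Fin m → ℤ) × Finset (Fin n) × (Fin m ⊕ Fin n)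

/-- The underlying vector space of `W_{m,n}`. -/
abbrev WSp (m n : ℕ) := WIdx m n →₀ ℂ

/-- Product of two monomials of `A_{m,n}`. -/
noncomputable def mulMono {m n : ℕ} (u v : AIdx m n) : ASp m n :=
  epsF u.2 v.2 • Finsupp.single (u.1 + v.1, u.2 ∪ v.2) 1

/-- The (supercommutative) multiplication of `A_{m,n}`, as a bilinear map. -/
noncomputable def mulA (m n : ℕ) : ASp m n →ₗ[ℂ] ASp m n →ₗ[ℂ] ASp m n :=
  Finsupp.lsum ℂ fun u => LinearMap.toSpanSingleton ℂ _
    (Finsupp.lsum ℂ fun v => LinearMap.toSpanSingleton ℂ _ (mulMono u v))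

/-- A monomial of `A_{m,n}` multiplied with a basis element of `W_{m,n}`. -/
noncomputable def smulMonoW {m n : ℕ} (u : AIdx m n) (w : WIdx m n) : WSp m n :=
  epsF u.2 w.2.1 • Finsupp.single (u.1 + w.1, u.2 ∪ w.2.1, w.2.2) 1

/-- The action of `A_{m,n}` on `W_{m,n} = A_{m,n} Δ` by multiplication, bilinear. -/
noncomputable def smulAW (m n : ℕ) : ASp m n →ₗ[ℂ] WSp m n →ₗ[ℂ] WSp m n :=
  Finsupp.lsum ℂ fun u => LinearMap.toSpanSingleton ℂ _
    (Finsupp.lsum ℂ fun w => LinearMap.toSpanSingleton ℂ _ (smulMonoW u w))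

/-- The scalar produced when the derivation part `c` (`d_i` or `∂/∂ξ_j`) hits the
monomial `t^β ξ_J`. -/
noncomputable def dCoeff {m n : ℕ} (c : Fin m ⊕ Fin n) (β : Fin m → ℤ) (J : Finset (Fin n)) : ℂ :=
  match c with
  | Sum.inl i => (β i : ℂ)
  | Sum.inr j => if j ∈ J then (-1 : ℂ) ^ ((J.filter (· < j)).card) else 0

/-- The `ξ`-part of the monomial after applying the derivation part `c`. -/
def dSet {m n : ℕ} (c : Fin m ⊕ Fin n) (J : Finset (Fin n)) : Finset (Fin n) :=
  match c with
  | Sum.inl _ => J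
  | Sum.inr j => J.erase j

/-- The basis superderivation `t^α ξ_I ∂` (index `u`) applied to the monomial
`t^β ξ_J` (index `v`), as an element of `A_{m,n}`. -/
noncomputable def derMono {m n : ℕ} (u : WIdx m n) (v : AIdx m n) : ASp m n :=
  dCoeff u.2.2 v.1 v.2 • mulMono (u.1, u.2.1) (v.1, dSet u.2.2 v.2)

/-- The parity of a basis element `t^α ξ_I ∂` of `W_{m,n}`: `|I|` plus the parity of
the derivation part. -/
def parWIdx {m n : ℕ} (u : WIdx m n) : ℕ :=
  u.2.1.card + (match u.2.2 with | Sum.inl _ => 0 | Sum.inr _ => 1)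

/-- Attach a derivation part `b` to an element of `A_{m,n}`: `a ↦ a ∂_b`. -/
noncomputable def attachD {m n : ℕ} (b : Fin m ⊕ Fin n) : ASp m n →ₗ[ℂ] WSp m n :=
  Finsupp.lmapDomain ℂ ℂ (fun a => (a.1, a.2, b))

/-- The superbracket of two basis elements `x = t^α ξ_I ∂_a`, `y = t^β ξ_J ∂_b`:
`[x, y] = x(t^β ξ_J) ∂_b − (−1)^{|x||y|} y(t^α ξ_I) ∂_a`. -/
noncomputable def bracketMono {m n : ℕ} (u v : WIdx m n) : WSp m n :=
  attachD v.2.2 (derMono u (v.1, v.2.1)) -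
    ((-1 : ℂ) ^ (parWIdx u * parWIdx v)) • attachD u.2.2 (derMono v (u.1, u.2.1))

/-- The superbracket of `W_{m,n}`, as a bilinear map. -/
noncomputable def bracketW (m n : ℕ) : WSp m n →ₗ[ℂ] WSp m n →ₗ[ℂ] WSp m n :=
  Finsupp.lsum ℂ fun u => LinearMap.toSpanSingleton ℂ _
    (Finsupp.lsum ℂ fun v => LinearMap.toSpanSingleton ℂ _ (bracketMono u v))

/-- The `ℤ^m`-graded component `(W_{m,n})_α`, spanned by `t^α ξ_I d_i` and
`t^α ξ_I ∂/∂ξ_j`. -/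
noncomputable def Wgr (m n : ℕ) (α : Fin m → ℤ) : Submodule ℂ (WSp m n) :=
  Submodule.span ℂ
    {w | ∃ (I : Finset (Fin n)) (c : Fin m ⊕ Fin n), w = Finsupp.single (α, I, c) 1}

/-- The (`ℤ₂`-)homogeneous component of `W_{m,n}` of parity `p`. -/
noncomputable def Wpar (m n : ℕ) (p : ℕ) : Submodule ℂ (WSp m n) :=
  Submodule.span ℂ
    {w | ∃ u : WIdx m n, parWIdx u % 2 = p % 2 ∧ w = Finsupp.single u 1}

/-- The operator `d_i + λ_i` ingredient: the derivation `d_i = t_i ∂/∂t_i` of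
`A_{m,n}`, acting on the monomial `t^β ξ_J` by the scalar `β_i`. -/
noncomputable def dOpA (m n : ℕ) (i : Fin m) : Module.End ℂ (ASp m n) :=
  Finsupp.lsum ℂ fun u => LinearMap.toSpanSingleton ℂ _
    ((u.1 i : ℂ) • (Finsupp.single u 1 : ASp m n))

/-- The odd superderivation `∂/∂ξ_j` of `A_{m,n}`. -/
noncomputable def xiOpA (m n : ℕ) (j : Fin n) : Module.End ℂ (ASp m n) :=
  Finsupp.lsum ℂ fun u => LinearMap.toSpanSingleton ℂ _
    (if j ∈ u.2 then
      ((-1 : ℂ) ^ ((u.2.filter (· < j)).card)) •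
        (Finsupp.single (u.1, u.2.erase j) 1 : ASp m n)
     else 0)

/-- The homogeneous component of `A_{m,n}` of parity `q ∈ ℤ₂`. -/
noncomputable def Apar (m n : ℕ) (q : ZMod 2) : Submodule ℂ (ASp m n) :=
  Submodule.span ℂ
    {a | ∃ u : AIdx m n, ((u.2.card : ZMod 2) = q) ∧ a = Finsupp.single u 1}

/-! ### Auxiliary lemmas for the simplicity proof -/

lemma lsumPoint {m n : ℕ} (g : AIdx m n → ASp m n) (x : ASp m n) (v : AIdx m n) :
    (Finsupp.lsum ℂ fun u => LinearMap.toSpanSingleton ℂ (ASp m n) (g u)) x v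
      = ∑ u ∈ x.support, x u * g u v := by
  classical
  rw [Finsupp.lsum_apply, Finsupp.sum, Finsupp.finset_sum_apply]
  exact Finset.sum_congr rfl fun u _ => by
    simp [LinearMap.toSpanSingleton_apply]

lemma dOpA_apply' {m n : ℕ} (i : Fin m) (x : ASp m n) (v : AIdx m n) :
    dOpA m n i x v = (v.1 i : ℂ) * x v := by
  classical
  rw [dOpA, lsumPoint]
  rw [Finset.sum_eq_single v]
  · simp [Finsupp.single_apply, mul_comm]
  · intro u hu hne
    simp [Finsupp.single_apply, hne]
  · intro hv
    simp [Finsupp.notMem_support_iff.mp hv]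

lemma xiOpA_apply' {m n : ℕ} (j : Fin n) (x : ASp m n) (v : AIdx m n) :
    xiOpA m n j x v = ∑ u ∈ x.support, x u *
      (if j ∈ u.2 then ((-1 : ℂ) ^ ((u.2.filter (· < j)).card)) *
        (Finsupp.single ((u.1, u.2.erase j) : AIdx m n) (1 : ℂ)) v else 0) := by
  rw [xiOpA, lsumPoint]
  refine Finset.sum_congr rfl fun u _ => ?_
  congr 1
  split
  · rw [Finsupp.smul_single, smul_eq_mul, mul_one, Finsupp.single_apply, Finsupp.single_apply]
    split <;> simp
  · simp

lemma xiOpA_support {m n : ℕ} (j : Fin n) (x : ASp m n) (v : AIdx m n)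
    (hv : v ∈ (xiOpA m n j x).support) :
    ∃ u ∈ x.support, j ∈ u.2 ∧ v = (u.1, u.2.erase j) := by
  classical
  rw [Finsupp.mem_support_iff, xiOpA_apply'] at hv
  obtain ⟨u, hu, hterm⟩ := Finset.exists_ne_zero_of_sum_ne_zero hv
  by_cases hj : j ∈ u.2
  · refine ⟨u, hu, hj, ?_⟩
    simp only [if_pos hj] at hterm
    by_contra hne
    have h0 : Finsupp.single ((u.1, u.2.erase j) : AIdx m n) (1 : ℂ) v = 0 :=
      Finsupp.single_eq_of_ne' (fun h => hne h.symm)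
    simp [h0] at hterm
  · simp [hj] at hterm

lemma mulA_single_single {m n : ℕ} (u v : AIdx m n) :
    mulA m n (Finsupp.single u 1) (Finsupp.single v 1) = mulMono u v := by
  rw [mulA]
  simp [LinearMap.toSpanSingleton_apply]

lemma single_mem_all {m n : ℕ} (P : Submodule ℂ (ASp m n))
    (hA : ∀ (a : ASp m n), ∀ x ∈ P, mulA m n a x ∈ P)
    (β0 : Fin m → ℤ)
    (h0 : Finsupp.single ((β0, (∅ : Finset (Fin n))) : AIdx m n) (1 : ℂ) ∈ P) :
    P = ⊤ := by
  classical
  rw [eq_top_iff]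
  intro x _
  have hs : ∀ v : AIdx m n, Finsupp.single v (1 : ℂ) ∈ P := by
    intro v
    have hm := hA (Finsupp.single ((v.1 - β0, v.2) : AIdx m n) 1) _ h0
    rw [mulA_single_single] at hm
    have he : mulMono ((v.1 - β0, v.2) : AIdx m n) ((β0, ∅) : AIdx m n)
        = Finsupp.single v 1 := by
      rw [mulMono]
      simp [epsF, tauF, sub_add_cancel]
    rwa [he] at hm
  have hx : x = ∑ v ∈ x.support, x v • Finsupp.single v (1 : ℂ) := by
    conv_lhs => rw [← Finsupp.sum_single x]
    rw [Finsupp.sum]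
    exact Finset.sum_congr rfl fun v _ => by rw [Finsupp.smul_single, smul_eq_mul, mul_one]
  rw [hx]
  exact Submodule.sum_mem _ fun v _ => P.smul_mem _ (hs v)

lemma isolateBeta {m n : ℕ} (lam : Fin m → ℂ) (P : Submodule ℂ (ASp m n))
    (hd : ∀ (i : Fin m), ∀ x ∈ P, dOpA m n i x + lam i • x ∈ P) :
    ∀ (k : ℕ) (x : ASp m n), x ∈ P → x ≠ 0 → (x.support.image Prod.fst).card ≤ k →
    ∃ y : ASp m n, y ∈ P ∧ y ≠ 0 ∧ ∃ β0, ∀ v ∈ y.support, v.1 = β0 := by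
  classical
  intro k
  induction k with
  | zero =>
    intro x _ hne hc
    exfalso
    obtain ⟨v0, hv0⟩ := Finsupp.support_nonempty_iff.mpr hne
    have : v0.1 ∈ x.support.image Prod.fst := Finset.mem_image_of_mem _ hv0
    have := Finset.card_pos.mpr ⟨v0.1, this⟩
    omega
  | succ k ih =>
    intro x hxP hne hc
    by_cases hcon : ∀ v ∈ x.support, ∀ w ∈ x.support, v.1 = w.1
    · obtain ⟨v0, hv0⟩ := Finsupp.support_nonempty_iff.mpr hne
      exact ⟨x, hxP, hne, v0.1, fun v hv => hcon v hv v0 hv0⟩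
    · push_neg at hcon
      obtain ⟨v1, hv1, v2, hv2, hne12⟩ := hcon
      obtain ⟨i, hi⟩ : ∃ i, v1.1 i ≠ v2.1 i := Function.ne_iff.mp hne12
      set y : ASp m n := dOpA m n i x - (v2.1 i : ℂ) • x with hy
      have hyP : y ∈ P := by
        have h1 := hd i x hxP
        have h2 : y = (dOpA m n i x + lam i • x) - (((v2.1 i : ℂ) + lam i)) • x := by
          rw [hy, add_smul]; abel
        rw [h2]
        exact sub_mem h1 (P.smul_mem _ hxP)
      have hyv : ∀ v : AIdx m n, y v = ((v.1 i : ℂ) - v2.1 i) * x v := by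
        intro v
        rw [hy]
        simp [dOpA_apply', sub_mul, mul_comm]
      have hy1 : y v1 ≠ 0 := by
        rw [hyv]
        exact mul_ne_zero (sub_ne_zero.mpr (by exact_mod_cast hi))
          (Finsupp.mem_support_iff.mp hv1)
      have hyne : y ≠ 0 := fun h => hy1 (by rw [h]; rfl)
      have hsub : y.support ⊆ x.support := by
        intro v hv
        rw [Finsupp.mem_support_iff] at hv ⊢
        intro h0
        exact hv (by rw [hyv, h0, mul_zero])
      have himg : y.support.image Prod.fst ⊆ (x.support.image Prod.fst).erase v2.1 := by
        intro β hβ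
        obtain ⟨v, hv, rfl⟩ := Finset.mem_image.mp hβ
        refine Finset.mem_erase.mpr ⟨?_, Finset.mem_image_of_mem _ (hsub hv)⟩
        intro heq
        have hz : y v = 0 := by rw [hyv, heq]; simp
        exact Finsupp.mem_support_iff.mp hv hz
      have hcard : (y.support.image Prod.fst).card ≤ k := by
        have h1 := Finset.card_le_card himg
        have h2 : ((x.support.image Prod.fst).erase v2.1).card
            = (x.support.image Prod.fst).card - 1 :=
          Finset.card_erase_of_mem (Finset.mem_image_of_mem _ hv2)
        have h3 : 1 ≤ (x.support.image Prod.fst).card :=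
          Finset.card_pos.mpr ⟨v2.1, Finset.mem_image_of_mem _ hv2⟩
        omega
      exact ih y hyP hyne hcard

lemma isolateXi {m n : ℕ} (P : Submodule ℂ (ASp m n))
    (hxi : ∀ (j : Fin n), ∀ x ∈ P, xiOpA m n j x ∈ P) (β0 : Fin m → ℤ) :
    ∀ (k : ℕ) (x : ASp m n), x ∈ P → x ≠ 0 → (∀ v ∈ x.support, v.1 = β0) →
    (∀ v ∈ x.support, v.2.card ≤ k) →
    Finsupp.single ((β0, (∅ : Finset (Fin n))) : AIdx m n) (1 : ℂ) ∈ P := by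
  classical
  intro k
  induction k with
  | zero =>
    intro x hxP hne hβ hcard
    obtain ⟨v0, hv0⟩ := Finsupp.support_nonempty_iff.mpr hne
    have hv0e : v0 = ((β0, ∅) : AIdx m n) := by
      have h1 := hβ v0 hv0
      have h2 : v0.2 = ∅ := Finset.card_eq_zero.mp (Nat.le_zero.mp (hcard v0 hv0))
      exact Prod.ext h1 h2
    have hval : x ((β0, ∅) : AIdx m n) ≠ 0 := by
      rw [← hv0e]; exact Finsupp.mem_support_iff.mp hv0
    have hx : Finsupp.single ((β0, (∅ : Finset (Fin n))) : AIdx m n) (1 : ℂ)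
        = (x ((β0, ∅) : AIdx m n))⁻¹ • x := by
      ext v
      by_cases hv : v = ((β0, ∅) : AIdx m n)
      · subst hv
        simp [inv_mul_cancel₀ hval]
      · have hxv : x v = 0 := by
          by_contra h
          have hvs : v ∈ x.support := Finsupp.mem_support_iff.mpr h
          have h1 := hβ v hvs
          have h2 : v.2 = ∅ := Finset.card_eq_zero.mp (Nat.le_zero.mp (hcard v hvs))
          exact hv (Prod.ext h1 h2)
        simp [Finsupp.single_eq_of_ne' (fun h => hv h.symm), hxv]
    rw [hx]
    exact P.smul_mem _ hxP
  | succ k ih =>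
    intro x hxP hne hβ hcard
    by_cases h0 : ∀ v ∈ x.support, v.2 = ∅
    · exact ih x hxP hne hβ (fun v hv => by simp [h0 v hv])
    · push_neg at h0
      obtain ⟨v0, hv0, hv0ne⟩ := h0
      obtain ⟨j, hj⟩ := hv0ne
      set y : ASp m n := xiOpA m n j x with hy
      have hyP : y ∈ P := hxi j x hxP
      have key : y ((β0, v0.2.erase j) : AIdx m n)
          = x v0 * ((-1 : ℂ) ^ ((v0.2.filter (· < j)).card)) := by
        rw [hy, xiOpA_apply', Finset.sum_eq_single v0]
        · have hfst : v0.1 = β0 := hβ v0 hv0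
          simp [hj, hfst, Finsupp.single_apply]
        · intro u hu hne'
          by_cases hju : j ∈ u.2
          · simp only [if_pos hju]
            have hz : Finsupp.single ((u.1, u.2.erase j) : AIdx m n) (1 : ℂ)
                ((β0, v0.2.erase j) : AIdx m n) = 0 := by
              apply Finsupp.single_eq_of_ne'
              intro heq
              apply hne'
              have h1 : u.1 = β0 := (Prod.mk.injEq _ _ _ _).mp heq |>.1
              have h2 : u.2.erase j = v0.2.erase j := (Prod.mk.injEq _ _ _ _).mp heq |>.2
              have h3 : u.2 = v0.2 := by
                rw [← Finset.insert_erase hju, h2, Finset.insert_erase hj]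
              have h4 : u.1 = v0.1 := by rw [h1, hβ v0 hv0]
              exact Prod.ext h4 h3
            simp [hz]
          · simp [hju]
        · intro h
          simp [Finsupp.notMem_support_iff.mp h]
      have hyne : y ≠ 0 := by
        intro h
        have : y ((β0, v0.2.erase j) : AIdx m n) = 0 := by rw [h]; rfl
        rw [key] at this
        exact (mul_ne_zero (Finsupp.mem_support_iff.mp hv0)
          (pow_ne_zero _ (by norm_num))) this
      have hyβ : ∀ v ∈ y.support, v.1 = β0 := by
        intro v hv
        obtain ⟨u, hu, _, rfl⟩ := xiOpA_support j x v hv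
        exact hβ u hu
      have hycard : ∀ v ∈ y.support, v.2.card ≤ k := by
        intro v hv
        obtain ⟨u, hu, hju, rfl⟩ := xiOpA_support j x v hv
        have h1 := hcard u hu
        have h2 : (u.2.erase j).card = u.2.card - 1 := Finset.card_erase_of_mem hju
        have h3 : 1 ≤ u.2.card := Finset.card_pos.mpr ⟨j, hju⟩
        simp only [h2]
        omega
      exact ih y hyP hyne hyβ hycard

/-- For every `λ ∈ ℂ^m`, the module `A(λ)` over the Weyl superalgebra `K_{m,n}` —
which is `A_{m,n}` with `d_i` acting as `d_i + λ_i`, `∂/∂ξ_j` acting naturally and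
`A_{m,n}` acting by multiplication — is strictly simple: it has no invariant subspaces
(graded or not) under all these operators other than `0` and the whole space. -/
theorem stmt12 (m n : ℕ) (lam : Fin m → ℂ) (P : Submodule ℂ (ASp m n))
    (hA : ∀ (a : ASp m n), ∀ x ∈ P, mulA m n a x ∈ P)
    (hd : ∀ (i : Fin m), ∀ x ∈ P, dOpA m n i x + lam i • x ∈ P)
    (hxi : ∀ (j : Fin n), ∀ x ∈ P, xiOpA m n j x ∈ P) :
    P = ⊥ ∨ P = ⊤ := by
  classical
  by_cases hbot : P = ⊥
  · exact Or.inl hbot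
  · right
    obtain ⟨x, hxP, hxne⟩ : ∃ x ∈ P, x ≠ 0 := by
      by_contra h
      push_neg at h
      exact hbot ((Submodule.eq_bot_iff P).mpr h)
    obtain ⟨y, hyP, hyne, β0, hβ⟩ :=
      isolateBeta lam P hd (x.support.image Prod.fst).card x hxP hxne le_rfl
    have h0 := isolateXi P hxi β0 (y.support.sup fun v => v.2.card) y hyP hyne hβ
      (fun v hv => Finset.le_sup (f := fun v : AIdx m n => v.2.card) hv)
    exact single_mem_all P hA β0 h0
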